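/- Let X and Y be finite sets, let p be a probability distribution on X with p(x) > 0 for all x ∈ X, and let W be a channel from X to Y, i.e. for each x ∈ X a probability distribution W_x on Y, with W_x(y) > 0 for all x, y. Let q(y) = Σ_{x∈X} p(x)·W_x(y) be the output distribution and define ψ(ρ) = log Σ_{x∈X} p(x) Σ_{y∈Y} W_x(y)^{1+ρ} · q(y)^{−ρ} for ρ ≥ 0. Then ψ is twice differentiable at ρ = 0 and ψ''(0) = Σ_{x} p(x) Σ_{y} W_x(y)·( log(W_x(y)/q(y)) )² − ( Σ_{x} p(x) Σ_{y} W_x(y)·log(W_x(y)/q(y)) )². -/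

import Mathlib

noncomputable section

/-- Lemma 3 of the paper: second derivative at 0 of the
Gallager-type function ψ(ρ | W, p). -/
theorem stmt_17 {X Y : Type*} [Fintype X] [Fintype Y]
    (p : X → ℝ) (W : X → Y → ℝ)
    (hp : ∀ x, 0 < p x) (hpsum : ∑ x, p x = 1)
    (hW : ∀ x y, 0 < W x y) (hWsum : ∀ x, ∑ y, W x y = 1)
    (q : Y → ℝ) (hq : ∀ y, q y = ∑ x, p x * W x y)
    (ψ : ℝ → ℝ)
    (hψ : ∀ ρ : ℝ, ψ ρ =
      Real.log (∑ x, p x * ∑ y, W x y ^ (1 + ρ) * q y ^ (-ρ))) :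
    DifferentiableAt ℝ ψ 0 ∧ DifferentiableAt ℝ (deriv ψ) 0 ∧
      deriv (deriv ψ) 0 =
        (∑ x, p x * ∑ y, W x y * Real.log (W x y / q y) ^ 2) -
          (∑ x, p x * ∑ y, W x y * Real.log (W x y / q y)) ^ 2 := by
  have hXne : Nonempty X := by
    by_contra h
    rw [not_nonempty_iff] at h
    simp [Finset.univ_eq_empty] at hpsum
  have hq0 : ∀ y, 0 < q y := by
    intro y
    rw [hq]
    exact Finset.sum_pos (fun x _ => mul_pos (hp x) (hW x y)) Finset.univ_nonempty
  set c : X → Y → ℝ := fun x y => Real.log (W x y / q y) with hc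
  set a : X → Y → ℝ := fun x y => p x * W x y with ha
  set f : ℝ → ℝ := fun ρ => ∑ x, ∑ y, a x y * Real.exp (ρ * c x y) with hfdef
  set g : ℝ → ℝ := fun ρ => ∑ x, ∑ y, (a x y * c x y) * Real.exp (ρ * c x y) with hgdef
  set h : ℝ → ℝ := fun ρ => ∑ x, ∑ y, (a x y * c x y * c x y) * Real.exp (ρ * c x y)
    with hhdef
  have hterm : ∀ (ρ : ℝ) x y, W x y ^ (1 + ρ) * q y ^ (-ρ)
      = W x y * Real.exp (ρ * c x y) := by
    intro ρ x y
    rw [Real.rpow_def_of_pos (hW x y), Real.rpow_def_of_pos (hq0 y), ← Real.exp_add]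
    have hlog : c x y = Real.log (W x y) - Real.log (q y) :=
      Real.log_div (hW x y).ne' (hq0 y).ne'
    have : Real.log (W x y) * (1 + ρ) + Real.log (q y) * (-ρ)
        = Real.log (W x y) + ρ * c x y := by rw [hlog]; ring
    rw [this, Real.exp_add, Real.exp_log (hW x y)]
  have hψf : ψ = fun ρ => Real.log (f ρ) := by
    funext ρ
    rw [hψ ρ]
    congr 1
    apply Finset.sum_congr rfl
    intro x _
    rw [Finset.mul_sum]
    apply Finset.sum_congr rfl
    intro y _
    rw [hterm ρ x y, ha]
    ring
  have hf : ∀ ρ, HasDerivAt f (g ρ) ρ := by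
    intro ρ
    have H : HasDerivAt f (∑ x, ∑ y, a x y * (Real.exp (ρ * c x y) * (1 * c x y))) ρ := by
      apply HasDerivAt.fun_sum; intro x _; apply HasDerivAt.fun_sum; intro y _
      exact (((hasDerivAt_id ρ).mul_const (c x y)).exp).const_mul (a x y)
    convert H using 1
    rw [hgdef]
    exact Finset.sum_congr rfl fun x _ => Finset.sum_congr rfl fun y _ => by ring
  have hg : ∀ ρ, HasDerivAt g (h ρ) ρ := by
    intro ρ
    have H : HasDerivAt g
        (∑ x, ∑ y, (a x y * c x y) * (Real.exp (ρ * c x y) * (1 * c x y))) ρ := by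
      apply HasDerivAt.fun_sum; intro x _; apply HasDerivAt.fun_sum; intro y _
      exact (((hasDerivAt_id ρ).mul_const (c x y)).exp).const_mul (a x y * c x y)
    convert H using 1
    rw [hhdef]
    exact Finset.sum_congr rfl fun x _ => Finset.sum_congr rfl fun y _ => by ring
  have hfpos : ∀ ρ, 0 < f ρ := by
    intro ρ
    apply Finset.sum_pos _ Finset.univ_nonempty
    intro x _
    apply Finset.sum_pos _ ?_
    · intro y _
      exact mul_pos (mul_pos (hp x) (hW x y)) (Real.exp_pos _)
    · by_contra hy
      rw [Finset.not_nonempty_iff_eq_empty, Finset.univ_eq_empty_iff] at hy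
      have := hWsum x
      simp [Finset.univ_eq_empty] at this
  have hψ' : ∀ ρ, HasDerivAt ψ (g ρ / f ρ) ρ := by
    intro ρ
    rw [hψf]
    exact (hf ρ).log (hfpos ρ).ne'
  have hderiv : deriv ψ = fun ρ => g ρ / f ρ := funext fun ρ => (hψ' ρ).deriv
  have hψ'' : HasDerivAt (deriv ψ) ((h 0 * f 0 - g 0 * g 0) / f 0 ^ 2) 0 := by
    rw [hderiv]
    exact (hg 0).div (hf 0) (hfpos 0).ne'
  have hf0 : f 0 = 1 := by
    have : f 0 = ∑ x, ∑ y, a x y := by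
      apply Finset.sum_congr rfl; intro x _; apply Finset.sum_congr rfl; intro y _
      simp
    rw [this]
    calc ∑ x, ∑ y, a x y = ∑ x, p x * ∑ y, W x y := by
          exact Finset.sum_congr rfl fun x _ => by rw [Finset.mul_sum]
      _ = ∑ x, p x := by
          exact Finset.sum_congr rfl fun x _ => by rw [hWsum x, mul_one]
      _ = 1 := hpsum
  have hg0 : g 0 = ∑ x, p x * ∑ y, W x y * Real.log (W x y / q y) := by
    rw [hgdef]
    apply Finset.sum_congr rfl; intro x _
    rw [Finset.mul_sum]
    apply Finset.sum_congr rfl; intro y _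
    simp [ha, hc]
    ring
  have hh0 : h 0 = ∑ x, p x * ∑ y, W x y * Real.log (W x y / q y) ^ 2 := by
    rw [hhdef]
    apply Finset.sum_congr rfl; intro x _
    rw [Finset.mul_sum]
    apply Finset.sum_congr rfl; intro y _
    simp [ha, hc]
    ring
  refine ⟨(hψ' 0).differentiableAt, hψ''.differentiableAt, ?_⟩
  rw [hψ''.deriv, hf0, hg0, hh0]
  ring
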